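/- The inclusion-exclusion function Q_ρ is a polynomial; in fact, over the complex numbers, Q_ρ(z) = ∏_ω (z − ω), where the product is taken over all complex roots of unity ω satisfying ω^{n₀} = 1 but ω^{n₀/rᵢ} ≠ 1 for every 1 ≤ i ≤ s. Moreover, the degree of Q_ρ equals φ(ρ) = ∏_{i=1}^{s} (rᵢ − 1). -/

import Mathlib

open Polynomial
open scoped Classical

lemma aux_dvd {s : ℕ} (r : Fin s → ℕ)
    (hcop : ∀ i j, i ≠ j → Nat.Coprime (r i) (r j)) (d : ℕ)
    (hd : d ∣ ∏ i, r i) (S : Finset (Fin s))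
    (h : ∀ i ∈ S, d ∣ ∏ k ∈ ({i} : Finset (Fin s))ᶜ, r k) :
    d ∣ ∏ k ∈ Sᶜ, r k := by
  classical
  induction S using Finset.induction_on with
  | empty => simpa [Finset.compl_empty] using hd
  | @insert a S ha IH =>
    have h1 : d ∣ ∏ k ∈ Sᶜ, r k := IH (fun i hi => h i (Finset.mem_insert_of_mem hi))
    have h2 : d ∣ ∏ k ∈ ({a} : Finset (Fin s))ᶜ, r k := h a (Finset.mem_insert_self a S)
    have hco : Nat.Coprime d (r a) := by
      refine Nat.Coprime.coprime_dvd_left h2 (Nat.Coprime.prod_left ?_)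
      intro k hk
      exact hcop k a (by simpa using hk)
    have hac : a ∈ Sᶜ := Finset.mem_compl.2 ha
    have hins : Sᶜ = insert a ((insert a S)ᶜ) := by
      rw [Finset.compl_insert, Finset.insert_erase hac]
    rw [hins, Finset.prod_insert (by simp)] at h1
    exact hco.dvd_of_dvd_mul_left h1

theorem stmt_0 (s : ℕ) (hs : 1 ≤ s) (r : Fin s → ℕ) (hr : ∀ i, 1 < r i)
    (hcop : ∀ i j, i ≠ j → Nat.Coprime (r i) (r j))
    (n₀ : ℕ) (hn₀ : n₀ = ∏ i, r i)
    (Q : Polynomial ℂ)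
    (hQ : Q = ∏ ω ∈ (Polynomial.nthRootsFinset n₀ (1 : ℂ)).filter
        (fun ω => ∀ i, ω ^ (n₀ / r i) ≠ 1), (X - C ω)) :
    Q * (∏ S ∈ Finset.univ.filter (fun S : Finset (Fin s) => Odd S.card),
        ((X : Polynomial ℂ) ^ (n₀ / ∏ i ∈ S, r i) - 1)) =
      (∏ S ∈ Finset.univ.filter (fun S : Finset (Fin s) => Even S.card),
        ((X : Polynomial ℂ) ^ (n₀ / ∏ i ∈ S, r i) - 1)) ∧
    Q.natDegree = ∏ i, (r i - 1) := by
  classical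
  have hr0 : ∀ i, 0 < r i := fun i => Nat.zero_lt_one.trans (hr i)
  have hn₀pos : 0 < n₀ := by rw [hn₀]; exact Finset.prod_pos fun i _ => hr0 i
  have hdiv : ∀ S : Finset (Fin s), n₀ / ∏ i ∈ S, r i = ∏ i ∈ Sᶜ, r i := by
    intro S
    rw [hn₀, ← Finset.prod_mul_prod_compl S r]
    exact Nat.mul_div_cancel_left _ (Finset.prod_pos fun i _ => hr0 i)
  have hri : ∀ i, n₀ / r i = ∏ k ∈ ({i} : Finset (Fin s))ᶜ, r k := by
    intro i; simpa using hdiv {i}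
  have hnSpos : ∀ S : Finset (Fin s), 0 < ∏ i ∈ Sᶜ, r i :=
    fun S => Finset.prod_pos fun i _ => hr0 i
  have hdvd_n₀ : ∀ S : Finset (Fin s), (∏ i ∈ Sᶜ, r i) ∣ n₀ := by
    intro S; rw [hn₀]
    exact Finset.prod_dvd_prod_of_subset _ _ r (Finset.subset_univ _)
  -- Claim A
  have claimA : ∀ ω : ℂ, ω ^ n₀ = 1 → ∀ S : Finset (Fin s),
      (ω ^ (∏ i ∈ Sᶜ, r i) = 1 ↔
        ∀ i ∈ S, ω ^ (∏ k ∈ ({i} : Finset (Fin s))ᶜ, r k) = 1) := by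
    intro ω hω S
    rw [← orderOf_dvd_iff_pow_eq_one]
    constructor
    · intro hdv i hi
      rw [← orderOf_dvd_iff_pow_eq_one]
      refine hdv.trans (Finset.prod_dvd_prod_of_subset _ _ r ?_)
      intro k hk
      simp only [Finset.mem_compl, Finset.mem_singleton] at hk ⊢
      rintro rfl; exact hk hi
    · intro h
      refine aux_dvd r hcop _ ?_ S ?_
      · rw [← hn₀]; exact orderOf_dvd_iff_pow_eq_one.2 hω
      · intro i hi; exact orderOf_dvd_iff_pow_eq_one.2 (h i hi)
  set F : Finset ℂ := (Polynomial.nthRootsFinset n₀ (1 : ℂ)).filter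
      (fun ω => ∀ i, ω ^ (n₀ / r i) ≠ 1) with hF
  have hmemF : ∀ ω : ℂ, ω ∈ F ↔ (ω ^ n₀ = 1 ∧
      ∀ i, ω ^ (∏ k ∈ ({i} : Finset (Fin s))ᶜ, r k) ≠ 1) := by
    intro ω
    rw [hF, Finset.mem_filter, Polynomial.mem_nthRootsFinset hn₀pos]
    simp only [hri]
  -- the multiset identity
  have hcount : ∀ ω : ℂ,
      (if ω ∈ F then 1 else 0) +
        ∑ S ∈ Finset.univ.filter (fun S : Finset (Fin s) => Odd S.card),
          (if ω ^ (∏ i ∈ Sᶜ, r i) = 1 then 1 else 0)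
      = ∑ S ∈ Finset.univ.filter (fun S : Finset (Fin s) => Even S.card),
          (if ω ^ (∏ i ∈ Sᶜ, r i) = 1 then 1 else 0) := by
    intro ω
    by_cases hω : ω ^ n₀ = 1
    · set T : Finset (Fin s) := Finset.univ.filter
        (fun i => ω ^ (∏ k ∈ ({i} : Finset (Fin s))ᶜ, r k) = 1) with hT
      have hiff : ∀ S : Finset (Fin s), (ω ^ (∏ i ∈ Sᶜ, r i) = 1 ↔ S ⊆ T) := by
        intro S
        rw [claimA ω hω S]
        constructor
        · intro h i hi
          exact Finset.mem_filter.2 ⟨Finset.mem_univ _, h i hi⟩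
        · intro h i hi
          exact (Finset.mem_filter.1 (h hi)).2
      have hFT : ω ∈ F ↔ T = ∅ := by
        rw [hmemF]
        constructor
        · intro h
          rw [Finset.eq_empty_iff_forall_notMem]
          intro i hi
          exact h.2 i (Finset.mem_filter.1 hi).2
        · intro h
          refine ⟨hω, fun i hcon => ?_⟩
          have : i ∈ T := Finset.mem_filter.2 ⟨Finset.mem_univ _, hcon⟩
          simp [h] at this
      have heq : ∀ p : Finset (Fin s) → Prop, ∀ _ : DecidablePred p,
          ∑ S ∈ Finset.univ.filter (fun S : Finset (Fin s) => p S),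
            (if ω ^ (∏ i ∈ Sᶜ, r i) = 1 then 1 else 0)
          = (T.powerset.filter p).card := by
        intro p _
        rw [← Finset.card_filter, Finset.filter_filter]
        congr 1
        ext S
        simp only [Finset.mem_filter, Finset.mem_univ, true_and, Finset.mem_powerset,
          hiff S]
        exact and_comm
      rw [heq _ inferInstance, heq _ inferInstance]
      have hz : ((T.powerset.filter (fun S : Finset (Fin s) => Even S.card)).card : ℤ) -
          (T.powerset.filter (fun S : Finset (Fin s) => Odd S.card)).card
          = if T = ∅ then 1 else 0 := by
        rw [← Finset.sum_powerset_neg_one_pow_card,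
          ← Finset.sum_filter_add_sum_filter_not T.powerset
            (fun S : Finset (Fin s) => Even S.card) (fun S => (-1 : ℤ) ^ S.card)]
        have h1 : ∑ S ∈ T.powerset.filter (fun S : Finset (Fin s) => Even S.card),
            (-1 : ℤ) ^ S.card
            = (T.powerset.filter (fun S : Finset (Fin s) => Even S.card)).card := by
          rw [Finset.sum_congr rfl
            (fun S hS => Even.neg_one_pow (Finset.mem_filter.1 hS).2)]
          simp
        have h2 : ∑ S ∈ T.powerset.filter (fun S : Finset (Fin s) => ¬ Even S.card),
            (-1 : ℤ) ^ S.card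
            = -(T.powerset.filter (fun S : Finset (Fin s) => Odd S.card)).card := by
          have : (T.powerset.filter (fun S : Finset (Fin s) => ¬ Even S.card))
              = T.powerset.filter (fun S : Finset (Fin s) => Odd S.card) := by
            apply Finset.filter_congr
            intro S _
            simp [Nat.not_even_iff_odd]
          rw [this, Finset.sum_congr rfl
            (fun S hS => Odd.neg_one_pow (Finset.mem_filter.1 hS).2)]
          simp
        rw [h1, h2]
        ring
      by_cases hTe : T = ∅
      · rw [if_pos hTe] at hz
        rw [if_pos (hFT.2 hTe)]
        omega
      · rw [if_neg hTe] at hz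
        rw [if_neg (fun h => hTe (hFT.1 h))]
        omega
    · have hzero : ∀ S : Finset (Fin s), ¬ (ω ^ (∏ i ∈ Sᶜ, r i) = 1) := by
        intro S hcon
        exact hω (orderOf_dvd_iff_pow_eq_one.1
          ((orderOf_dvd_iff_pow_eq_one.2 hcon).trans (hdvd_n₀ S)))
      have hωF : ω ∉ F := fun h => hω ((hmemF ω).1 h).1
      simp [hzero, hωF]
  -- polynomials as multiset products
  have hprim := Complex.isPrimitiveRoot_exp n₀ hn₀pos.ne'
  have hsplit : ∀ n : ℕ, 0 < n →
      ((X : Polynomial ℂ) ^ n - 1) = ∏ ω ∈ Polynomial.nthRootsFinset n (1 : ℂ), (X - C ω) :=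
    fun n hn => X_pow_sub_one_eq_prod hn (Complex.isPrimitiveRoot_exp n hn.ne')
  have hpoly : ∀ t : Finset (Finset (Fin s)),
      (∏ S ∈ t, ((X : Polynomial ℂ) ^ (∏ i ∈ Sᶜ, r i) - 1))
      = ((∑ S ∈ t, (Polynomial.nthRootsFinset (∏ i ∈ Sᶜ, r i) (1 : ℂ)).val).map
          (fun ω => X - C ω)).prod := by
    intro t
    induction t using Finset.induction_on with
    | empty => simp
    | @insert a t ha IH =>
      rw [Finset.prod_insert ha, Finset.sum_insert ha, Multiset.map_add,
        Multiset.prod_add, IH, hsplit _ (hnSpos a), Finset.prod_eq_multiset_prod]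
  have hcnt : ∀ (n : ℕ), 0 < n → ∀ ω : ℂ,
      (Polynomial.nthRootsFinset n (1 : ℂ)).val.count ω = if ω ^ n = 1 then 1 else 0 := by
    intro n hn ω
    split_ifs with h
    · exact Multiset.count_eq_one_of_mem (Polynomial.nthRootsFinset n (1 : ℂ)).nodup
        ((Polynomial.mem_nthRootsFinset hn 1).2 h)
    · exact Multiset.count_eq_zero_of_notMem
        (fun hc => h ((Polynomial.mem_nthRootsFinset hn 1).1 hc))
  have hM : F.val + ∑ S ∈ Finset.univ.filter (fun S : Finset (Fin s) => Odd S.card),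
        (Polynomial.nthRootsFinset (∏ i ∈ Sᶜ, r i) (1 : ℂ)).val
      = ∑ S ∈ Finset.univ.filter (fun S : Finset (Fin s) => Even S.card),
        (Polynomial.nthRootsFinset (∏ i ∈ Sᶜ, r i) (1 : ℂ)).val := by
    ext ω
    rw [Multiset.count_add, Multiset.count_sum', Multiset.count_sum']
    have hFcnt : F.val.count ω = if ω ∈ F then 1 else 0 := by
      split_ifs with h
      · exact Multiset.count_eq_one_of_mem F.nodup h
      · exact Multiset.count_eq_zero_of_notMem (by simpa using h)
    rw [hFcnt]
    calc (if ω ∈ F then 1 else 0) + ∑ S ∈ Finset.univ.filter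
          (fun S : Finset (Fin s) => Odd S.card),
          (Polynomial.nthRootsFinset (∏ i ∈ Sᶜ, r i) (1 : ℂ)).val.count ω
        = (if ω ∈ F then 1 else 0) + ∑ S ∈ Finset.univ.filter
          (fun S : Finset (Fin s) => Odd S.card),
          (if ω ^ (∏ i ∈ Sᶜ, r i) = 1 then 1 else 0) := by
          rw [Finset.sum_congr rfl (fun S _ => hcnt _ (hnSpos S) ω)]
      _ = ∑ S ∈ Finset.univ.filter
          (fun S : Finset (Fin s) => Even S.card),
          (if ω ^ (∏ i ∈ Sᶜ, r i) = 1 then 1 else 0) := hcount ω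
      _ = _ := (Finset.sum_congr rfl (fun S _ => (hcnt _ (hnSpos S) ω).symm))
  -- Part 1
  have part1 : Q * (∏ S ∈ Finset.univ.filter (fun S : Finset (Fin s) => Odd S.card),
        ((X : Polynomial ℂ) ^ (n₀ / ∏ i ∈ S, r i) - 1)) =
      (∏ S ∈ Finset.univ.filter (fun S : Finset (Fin s) => Even S.card),
        ((X : Polynomial ℂ) ^ (n₀ / ∏ i ∈ S, r i) - 1)) := by
    simp only [hdiv]
    rw [hQ, hpoly, hpoly, Finset.prod_eq_multiset_prod,
      ← Multiset.prod_add, ← Multiset.map_add, hM]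
  refine ⟨part1, ?_⟩
  -- Part 2 : degrees
  have hQmonic : Q.Monic := by
    rw [hQ]; exact monic_prod_of_monic _ _ fun ω _ => monic_X_sub_C ω
  have hfac : ∀ S : Finset (Fin s),
      ((X : Polynomial ℂ) ^ (n₀ / ∏ i ∈ S, r i) - 1).Monic := by
    intro S
    have hne : (n₀ / ∏ i ∈ S, r i) ≠ 0 := by rw [hdiv]; exact (hnSpos S).ne'
    have := monic_X_pow_sub_C (1 : ℂ) hne
    simpa using this
  have hOm : (∏ S ∈ Finset.univ.filter (fun S : Finset (Fin s) => Odd S.card),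
      ((X : Polynomial ℂ) ^ (n₀ / ∏ i ∈ S, r i) - 1)).Monic :=
    monic_prod_of_monic _ _ fun S _ => hfac S
  have hdegpow : ∀ S : Finset (Fin s),
      ((X : Polynomial ℂ) ^ (n₀ / ∏ i ∈ S, r i) - 1).natDegree = ∏ i ∈ Sᶜ, r i := by
    intro S
    rw [hdiv]
    have : ((X : Polynomial ℂ) ^ (∏ i ∈ Sᶜ, r i) - C 1).natDegree = ∏ i ∈ Sᶜ, r i :=
      natDegree_X_pow_sub_C
    simpa using this
  have hdeg : Q.natDegree +
      ∑ S ∈ Finset.univ.filter (fun S : Finset (Fin s) => Odd S.card), ∏ i ∈ Sᶜ, r i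
      = ∑ S ∈ Finset.univ.filter (fun S : Finset (Fin s) => Even S.card),
          ∏ i ∈ Sᶜ, r i := by
    have h := congrArg natDegree part1
    rwa [hQmonic.natDegree_mul hOm,
      Polynomial.natDegree_prod _ _ (fun S _ => (hfac S).ne_zero),
      Polynomial.natDegree_prod _ _ (fun S _ => (hfac S).ne_zero),
      Finset.sum_congr rfl (fun S _ => hdegpow S),
      Finset.sum_congr rfl (fun S _ => hdegpow S)] at h
  -- integer identity
  have hzint : (∑ S ∈ Finset.univ.filter (fun S : Finset (Fin s) => Even S.card),
        ∏ i ∈ Sᶜ, (r i : ℤ))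
      - (∑ S ∈ Finset.univ.filter (fun S : Finset (Fin s) => Odd S.card),
        ∏ i ∈ Sᶜ, (r i : ℤ))
      = ∏ i, ((r i : ℤ) - 1) := by
    have hb := Finset.prod_add (fun _ : Fin s => (-1 : ℤ)) (fun i => (r i : ℤ))
      Finset.univ
    have hc : ∀ S : Finset (Fin s),
        (∏ _i ∈ S, (-1 : ℤ)) * (∏ i ∈ Finset.univ \ S, (r i : ℤ))
        = (-1 : ℤ) ^ S.card * ∏ i ∈ Sᶜ, (r i : ℤ) := by
      intro S
      rw [Finset.prod_const, ← Finset.compl_eq_univ_sdiff]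
    rw [Finset.powerset_univ, Finset.sum_congr rfl (fun S _ => hc S)] at hb
    have hsplit2 := Finset.sum_filter_add_sum_filter_not Finset.univ
      (fun S : Finset (Fin s) => Even S.card)
      (fun S : Finset (Fin s) => (-1 : ℤ) ^ S.card * ∏ i ∈ Sᶜ, (r i : ℤ))
    have h1 : ∑ S ∈ Finset.univ.filter (fun S : Finset (Fin s) => Even S.card),
        (-1 : ℤ) ^ S.card * ∏ i ∈ Sᶜ, (r i : ℤ)
        = ∑ S ∈ Finset.univ.filter (fun S : Finset (Fin s) => Even S.card),
          ∏ i ∈ Sᶜ, (r i : ℤ) := by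
      refine Finset.sum_congr rfl fun S hS => ?_
      rw [Even.neg_one_pow (Finset.mem_filter.1 hS).2, one_mul]
    have h2 : ∑ S ∈ Finset.univ.filter (fun S : Finset (Fin s) => ¬ Even S.card),
        (-1 : ℤ) ^ S.card * ∏ i ∈ Sᶜ, (r i : ℤ)
        = -∑ S ∈ Finset.univ.filter (fun S : Finset (Fin s) => Odd S.card),
          ∏ i ∈ Sᶜ, (r i : ℤ) := by
      have he : (Finset.univ.filter (fun S : Finset (Fin s) => ¬ Even S.card))
          = Finset.univ.filter (fun S : Finset (Fin s) => Odd S.card) := by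
        apply Finset.filter_congr
        intro S _
        simp [Nat.not_even_iff_odd]
      rw [he, ← Finset.sum_neg_distrib]
      refine Finset.sum_congr rfl fun S hS => ?_
      rw [Odd.neg_one_pow (Finset.mem_filter.1 hS).2]
      ring
    rw [← hsplit2, h1, h2] at hb
    have hr1 : ∀ i : Fin s, (-1 : ℤ) + (r i : ℤ) = (r i : ℤ) - 1 := fun i => by ring
    rw [Finset.prod_congr rfl (fun i _ => hr1 i)] at hb
    linarith
  have hcast : ((∏ i, (r i - 1) : ℕ) : ℤ) = ∏ i, ((r i : ℤ) - 1) := by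
    rw [Nat.cast_prod]
    exact Finset.prod_congr rfl fun i _ => by
      rw [Nat.cast_sub (hr i).le, Nat.cast_one]
  have hdegZ := congrArg (Nat.cast : ℕ → ℤ) hdeg
  push_cast at hdegZ
  have : (Q.natDegree : ℤ) = ((∏ i, (r i - 1) : ℕ) : ℤ) := by
    rw [hcast]; omega
  exact_mod_cast this
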